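/- arXiv:2312.09586 — 3 statements merged into one kernel-verified Lean document; each statement's English description precedes it below -/
import Mathlib

section
/- Let Θ ⊆ ℝ^d be open and let g : Θ → ℝ^{d×d} be a differentiable map whose value g(θ) is a symmetric positive definite matrix for every θ, with inverse matrix entries g^{bc}(θ). Suppose there are functions Γ^{(0)}_{abc} : Θ → ℝ satisfying the dual structure identity ∂_a g_{bc}(θ) = Γ^{(0)}_{abc}(θ) + Γ^{(0)}_{acb}(θ) for all indices a, b, c and all θ ∈ Θ. Then the Jeffreys prior π_J(θ) = (det g(θ))^{1/2} satisfies ∂_a log π_J(θ) = Σ_{b,c} g^{bc}(θ) Γ^{(0)}_{abc}(θ) for all a and all θ ∈ Θ; that is, the Jeffreys prior is a 0-parallel prior. -/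
/-- Partial derivative of `f : ℝ^d → ℝ` along the `a`-th coordinate. -/
noncomputable def pder {d : ℕ} (a : Fin d) (f : (Fin d → ℝ) → ℝ) (θ : Fin d → ℝ) : ℝ :=
  fderiv ℝ f θ (Pi.single a 1)

open Matrix

/-- `det` as a continuous multilinear map in the rows. -/
noncomputable def detCM (d : ℕ) :
    ContinuousMultilinearMap ℝ (fun _ : Fin d => (Fin d → ℝ)) ℝ :=
  MultilinearMap.mkContinuous
    ((detRowAlternating : (Fin d → ℝ) [⋀^Fin d]→ₗ[ℝ] ℝ) : MultilinearMap ℝ (fun _ : Fin d => (Fin d → ℝ)) ℝ)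
    (Fintype.card (Equiv.Perm (Fin d))) (fun M => by
      have h1 : ((detRowAlternating : (Fin d → ℝ) [⋀^Fin d]→ₗ[ℝ] ℝ) :
          MultilinearMap ℝ (fun _ : Fin d => (Fin d → ℝ)) ℝ) M = (Matrix.of M).det := rfl
      rw [h1, Matrix.det_apply]
      refine (norm_sum_le _ _).trans ?_
      have hbound : ∀ σ : Equiv.Perm (Fin d),
          ‖Equiv.Perm.sign σ • ∏ i, Matrix.of M (σ i) i‖ ≤ ∏ i, ‖M i‖ := by
        intro σ
        have h2 : ‖Equiv.Perm.sign σ • ∏ i, Matrix.of M (σ i) i‖ = ‖∏ i, M (σ i) i‖ := by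
          rcases Int.units_eq_one_or (Equiv.Perm.sign σ) with h | h <;>
            simp [h, Units.smul_def, norm_neg]
        rw [h2, norm_prod]
        calc ∏ i, ‖M (σ i) i‖ ≤ ∏ i, ‖M (σ i)‖ :=
              Finset.prod_le_prod (fun i _ => norm_nonneg _)
                (fun i _ => norm_le_pi_norm (M (σ i)) i)
          _ = ∏ i, ‖M i‖ := Equiv.prod_comp σ (fun j => ‖M j‖)
      calc ∑ σ : Equiv.Perm (Fin d), ‖Equiv.Perm.sign σ • ∏ i, Matrix.of M (σ i) i‖
          ≤ ∑ _σ : Equiv.Perm (Fin d), ∏ i, ‖M i‖ := Finset.sum_le_sum fun σ _ => hbound σ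
        _ = (Fintype.card (Equiv.Perm (Fin d))) * ∏ i, ‖M i‖ := by
            rw [Finset.sum_const, Finset.card_univ, nsmul_eq_mul])

lemma detCM_apply {d : ℕ} (M : Matrix (Fin d) (Fin d) ℝ) :
    detCM d (fun i => M i) = M.det := rfl

lemma det_updateRow_eq_sum {d : ℕ} (A : Matrix (Fin d) (Fin d) ℝ) (i : Fin d) (v : Fin d → ℝ) :
    (A.updateRow i v).det = ∑ c, v c * A.adjugate c i := by
  have h1 : (A.updateRow i v).det = Aᵀ.cramer v i := by
    rw [cramer_apply, Matrix.updateCol_transpose, Matrix.det_transpose]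
  rw [h1]
  have h2 : v = ∑ c, v c • (Pi.single c (1 : ℝ) : Fin d → ℝ) := by
    ext j
    simp [Pi.single_apply, Finset.sum_ite_eq, mul_comm]
  conv_lhs => rw [h2]
  rw [map_sum]
  simp only [_root_.map_smul, Finset.sum_apply, Pi.smul_apply, smul_eq_mul]
  refine Finset.sum_congr rfl fun c _ => ?_
  rw [adjugate_apply, cramer_apply, Matrix.updateCol_transpose, Matrix.det_transpose]

/-- If `Γ^{(0)}` satisfies the dual (self-dual) structure identity
`∂_a g_{bc} = Γ^{(0)}_{abc} + Γ^{(0)}_{acb}`, then the Jeffreys prior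
`π_J = (det g)^{1/2}` is a 0-parallel prior:
`∂_a log π_J = Σ_{b,c} g^{bc} Γ^{(0)}_{abc}`. -/
theorem stmt_4 {d : ℕ} (Θ : Set (Fin d → ℝ)) (hΘ_open : IsOpen Θ)
    (g : (Fin d → ℝ) → Matrix (Fin d) (Fin d) ℝ)
    (hg_diff : ∀ b c : Fin d, ∀ θ ∈ Θ, DifferentiableAt ℝ (fun θ' => g θ' b c) θ)
    (hg_symm : ∀ θ ∈ Θ, (g θ).IsSymm)
    (hg_pd : ∀ θ ∈ Θ, (g θ).PosDef)
    (Γ0 : (Fin d → ℝ) → Fin d → Fin d → Fin d → ℝ)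
    (h_dual : ∀ θ ∈ Θ, ∀ a b c : Fin d,
      pder a (fun θ' => g θ' b c) θ = Γ0 θ a b c + Γ0 θ a c b) :
    ∀ θ ∈ Θ, ∀ a : Fin d,
      pder a (fun θ' => Real.log (Real.sqrt (g θ').det)) θ =
        ∑ b : Fin d, ∑ c : Fin d, (g θ)⁻¹ b c * Γ0 θ a b c := by
  classical
  intro θ hθ a
  have hdet : 0 < (g θ).det := (hg_pd θ hθ).det_pos
  -- differentiability of the rows
  have hrowdiff : ∀ i : Fin d, DifferentiableAt ℝ (fun θ' => g θ' i) θ := by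
    intro i
    rw [differentiableAt_pi]
    exact fun c => hg_diff i c θ hθ
  set R' : ∀ _ : Fin d, (Fin d → ℝ) →L[ℝ] (Fin d → ℝ) :=
    fun i => fderiv ℝ (fun θ' => g θ' i) θ with hR'
  have hrow : ∀ i : Fin d, HasFDerivAt (fun θ' => g θ' i) (R' i) θ :=
    fun i => (hrowdiff i).hasFDerivAt
  -- derivative of det ∘ g
  have hdetg : HasFDerivAt (fun θ' => (g θ').det)
      (∑ i : Fin d, ((detCM d).toContinuousLinearMap (fun j => g θ j) i).comp (R' i)) θ :=
    HasFDerivAt.multilinear_comp (detCM d) hrow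
  -- derivative of log det / 2
  have hlog : HasFDerivAt (fun θ' => (2⁻¹ : ℝ) • Real.log ((g θ').det)) _ θ :=
    (hdetg.log hdet.ne').const_smul (2⁻¹ : ℝ)
  -- replace log sqrt by log / 2 near θ
  have hEq : (fun θ' => Real.log (Real.sqrt (g θ').det)) =ᶠ[nhds θ]
      fun θ' => (2⁻¹ : ℝ) • Real.log ((g θ').det) := by
    filter_upwards [hΘ_open.mem_nhds hθ] with x hx
    rw [Real.log_sqrt (hg_pd x hx).det_pos.le, smul_eq_mul, div_eq_inv_mul]
  rw [pder, hEq.fderiv_eq, hlog.fderiv]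
  -- compute R' i applied to the basis vector
  have hRv : ∀ i : Fin d, R' i (Pi.single a 1) = fun c => pder a (fun θ' => g θ' i c) θ := by
    intro i
    show fderiv ℝ (fun θ' => g θ' i) θ (Pi.single a 1) = _
    rw [fderiv_pi (fun c => hg_diff i c θ hθ)]
    rfl
  have hsymm : ∀ b c : Fin d, (g θ)⁻¹ c b = (g θ)⁻¹ b c := by
    intro b c
    conv_lhs => rw [show (g θ)⁻¹ c b = ((g θ)⁻¹)ᵀ b c from rfl,
      Matrix.transpose_nonsing_inv, (hg_symm θ hθ).eq]
  have hinv : ∀ b c : Fin d, (g θ)⁻¹ b c = ((g θ).det)⁻¹ * (g θ).adjugate b c := by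
    intro b c
    rw [Matrix.inv_def, Matrix.smul_apply, Ring.inverse_eq_inv', smul_eq_mul]
  have hadj : ∀ b c : Fin d, (g θ).adjugate b c = (g θ).det * (g θ)⁻¹ b c := by
    intro b c
    rw [hinv b c, ← mul_assoc, mul_inv_cancel₀ hdet.ne', one_mul]
  have key : ∀ i : Fin d,
      detCM d (Function.update (fun j => g θ j) i (R' i (Pi.single a 1)))
        = ∑ c, (Γ0 θ a i c + Γ0 θ a c i) * ((g θ).det * (g θ)⁻¹ c i) := by
    intro i
    have h0 : detCM d (Function.update (fun j => g θ j) i (R' i (Pi.single a 1)))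
        = ((g θ).updateRow i (R' i (Pi.single a 1))).det := rfl
    rw [h0, det_updateRow_eq_sum]
    refine Finset.sum_congr rfl fun c _ => ?_
    simp only [hRv]
    rw [h_dual θ hθ a i c, hadj]
  simp only [ContinuousLinearMap.smul_apply, ContinuousLinearMap.coe_sum',
    Finset.sum_apply, ContinuousLinearMap.comp_apply,
    ContinuousMultilinearMap.toContinuousLinearMap_apply]
  simp only [key]
  have h1 : ∑ i : Fin d, ∑ c : Fin d, Γ0 θ a i c * (g θ)⁻¹ c i
      = ∑ b : Fin d, ∑ c : Fin d, (g θ)⁻¹ b c * Γ0 θ a b c := by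
    refine Finset.sum_congr rfl fun b _ => Finset.sum_congr rfl fun c _ => ?_
    rw [hsymm b c]; ring
  have h2 : ∑ i : Fin d, ∑ c : Fin d, Γ0 θ a c i * (g θ)⁻¹ c i
      = ∑ b : Fin d, ∑ c : Fin d, (g θ)⁻¹ b c * Γ0 θ a b c := by
    rw [Finset.sum_comm]
    exact Finset.sum_congr rfl fun b _ => Finset.sum_congr rfl fun c _ => by ring
  have expand : ∀ i : Fin d,
      ∑ c, (Γ0 θ a i c + Γ0 θ a c i) * ((g θ).det * (g θ)⁻¹ c i)
        = (g θ).det * ∑ c, Γ0 θ a i c * (g θ)⁻¹ c i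
          + (g θ).det * ∑ c, Γ0 θ a c i * (g θ)⁻¹ c i := by
    intro i
    rw [Finset.mul_sum, Finset.mul_sum, ← Finset.sum_add_distrib]
    exact Finset.sum_congr rfl fun c _ => by ring
  simp only [expand]
  rw [Finset.sum_add_distrib, ← Finset.mul_sum, ← Finset.mul_sum, h1, h2]
  rw [smul_eq_mul, smul_eq_mul]
  field_simp
  ring
end

section
/- Let Θ ⊆ ℝ^d be open, α ∈ ℝ, and let g : Θ → ℝ^{d×d} take symmetric positive definite values with inverse entries g^{cd}(θ). Suppose functions T_{abc} : Θ → ℝ and e-connection coefficients Γ^{(e)}_{abc} : Θ → ℝ satisfy the α-affine relation Γ^{(e)}_{abc}(θ) = −((1−α)/2) T_{abc}(θ) for all indices and all θ, and set T_a(θ) := Σ_{b,c} g^{bc}(θ) T_{abc}(θ). Let π_J, π_e, π_m, π_MAP : Θ → (0, ∞) be differentiable with ∂_a log π_m(θ) − ∂_a log π_e(θ) = T_a(θ) for all a and θ (π_e and π_m are the e- and m-parallel priors). Define, for a constant C > 0, π_PM(θ) := C · π_MAP(θ) · π_J(θ) · (π_e(θ)/π_m(θ))^{(1−α)/4}. Then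 the pair (π_PM, π_MAP) satisfies the exact matching equation: for all a and all θ ∈ Θ, ∂_a log(π_PM(θ)/π_MAP(θ)) − ∂_a log π_J(θ) − (1/2) Σ_{c,d} g^{cd}(θ) Γ^{(e)}_{cda}(θ) = 0. -/
/-- In an α-affine coordinate (`Γ^{(e)}_{abc} = −((1−α)/2) T_{abc}`), the pair
`(π_PM, π_MAP)` with `π_PM = C · π_MAP · π_J · (π_e/π_m)^{(1−α)/4}` satisfies the
exact matching equation
`∂_a log(π_PM/π_MAP) − ∂_a log π_J − (1/2) Σ_{c,d} g^{cd} Γ^{(e)}_{cda} = 0`. -/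
theorem stmt_6 {d : ℕ} (Θ : Set (Fin d → ℝ)) (hΘ_open : IsOpen Θ) (α : ℝ)
    (g : (Fin d → ℝ) → Matrix (Fin d) (Fin d) ℝ)
    (hg_symm : ∀ θ ∈ Θ, (g θ).IsSymm)
    (hg_pd : ∀ θ ∈ Θ, (g θ).PosDef)
    (T Γe : (Fin d → ℝ) → Fin d → Fin d → Fin d → ℝ)
    -- the skewness tensor is fully symmetric in its indices:
    (hT_symm₁ : ∀ θ ∈ Θ, ∀ a b c : Fin d, T θ a b c = T θ b a c)
    (hT_symm₂ : ∀ θ ∈ Θ, ∀ a b c : Fin d, T θ a b c = T θ a c b)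
    -- the α-affine relation:
    (h_affine : ∀ θ ∈ Θ, ∀ a b c : Fin d, Γe θ a b c = -((1 - α) / 2) * T θ a b c)
    (Ta : (Fin d → ℝ) → Fin d → ℝ)
    (hTa : ∀ θ ∈ Θ, ∀ a : Fin d, Ta θ a = ∑ b : Fin d, ∑ c : Fin d, (g θ)⁻¹ b c * T θ a b c)
    (πJ πe πm πMAP : (Fin d → ℝ) → ℝ)
    (hπJ_pos : ∀ θ ∈ Θ, 0 < πJ θ) (hπe_pos : ∀ θ ∈ Θ, 0 < πe θ)
    (hπm_pos : ∀ θ ∈ Θ, 0 < πm θ) (hπMAP_pos : ∀ θ ∈ Θ, 0 < πMAP θ)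
    (hπJ_diff : ∀ θ ∈ Θ, DifferentiableAt ℝ πJ θ)
    (hπe_diff : ∀ θ ∈ Θ, DifferentiableAt ℝ πe θ)
    (hπm_diff : ∀ θ ∈ Θ, DifferentiableAt ℝ πm θ)
    (hπMAP_diff : ∀ θ ∈ Θ, DifferentiableAt ℝ πMAP θ)
    -- π_e and π_m are the e- and m-parallel priors: ∂_a log(π_m/π_e) = T_a
    (h_em : ∀ θ ∈ Θ, ∀ a : Fin d,
      pder a (fun θ' => Real.log (πm θ')) θ - pder a (fun θ' => Real.log (πe θ')) θ = Ta θ a)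
    (C : ℝ) (hC : 0 < C)
    (πPM : (Fin d → ℝ) → ℝ)
    (hπPM : ∀ θ, πPM θ = C * πMAP θ * πJ θ * (πe θ / πm θ) ^ ((1 - α) / 4)) :
    ∀ θ ∈ Θ, ∀ a : Fin d,
      pder a (fun θ' => Real.log (πPM θ' / πMAP θ')) θ -
        pder a (fun θ' => Real.log (πJ θ')) θ -
        (1 / 2) * ∑ c : Fin d, ∑ e : Fin d, (g θ)⁻¹ c e * Γe θ c e a = 0 := by

  intro θ hθ a
  have hJ : DifferentiableAt ℝ (fun θ' => Real.log (πJ θ')) θ :=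
    (hπJ_diff θ hθ).log (hπJ_pos θ hθ).ne'
  have he : DifferentiableAt ℝ (fun θ' => Real.log (πe θ')) θ :=
    (hπe_diff θ hθ).log (hπe_pos θ hθ).ne'
  have hm : DifferentiableAt ℝ (fun θ' => Real.log (πm θ')) θ :=
    (hπm_diff θ hθ).log (hπm_pos θ hθ).ne'
  have hev : (fun θ' => Real.log (πPM θ' / πMAP θ')) =ᶠ[nhds θ]
      (fun θ' => Real.log (πJ θ') +
        ((1 - α) / 4) * (Real.log (πe θ') - Real.log (πm θ')) + Real.log C) := by
    filter_upwards [hΘ_open.mem_nhds hθ] with x hx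
    have hM := hπMAP_pos x hx
    have hE := hπe_pos x hx
    have hMm := hπm_pos x hx
    have hJp := hπJ_pos x hx
    have hr : (0:ℝ) < πe x / πm x := div_pos hE hMm
    have hx1 : πPM x / πMAP x = C * πJ x * (πe x / πm x) ^ ((1 - α) / 4) := by
      rw [hπPM]; field_simp
    rw [hx1, Real.log_mul (by positivity) (by positivity),
        Real.log_mul hC.ne' hJp.ne', Real.log_rpow hr, Real.log_div hE.ne' hMm.ne']
    ring
  have hD : HasFDerivAt (fun θ' => Real.log (πJ θ') +
      ((1 - α) / 4) * (Real.log (πe θ') - Real.log (πm θ')) + Real.log C)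
      (fderiv ℝ (fun θ' => Real.log (πJ θ')) θ +
        ((1 - α) / 4) • (fderiv ℝ (fun θ' => Real.log (πe θ')) θ -
          fderiv ℝ (fun θ' => Real.log (πm θ')) θ)) θ :=
    (hJ.hasFDerivAt.add ((he.hasFDerivAt.sub hm.hasFDerivAt).const_mul ((1 - α) / 4))).add_const _
  have key : pder a (fun θ' => Real.log (πPM θ' / πMAP θ')) θ =
      pder a (fun θ' => Real.log (πJ θ')) θ +
        ((1 - α) / 4) * (pder a (fun θ' => Real.log (πe θ')) θ -
          pder a (fun θ' => Real.log (πm θ')) θ) := by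
    simp only [pder, hev.fderiv_eq, hD.fderiv]
    simp
  have hS : ∑ c : Fin d, ∑ e : Fin d, (g θ)⁻¹ c e * Γe θ c e a
      = -((1 - α) / 2) * Ta θ a := by
    rw [hTa θ hθ a, Finset.mul_sum]
    refine Finset.sum_congr rfl fun c _ => ?_
    rw [Finset.mul_sum]
    refine Finset.sum_congr rfl fun e _ => ?_
    rw [h_affine θ hθ c e a]
    have hT : T θ c e a = T θ a c e := by
      rw [hT_symm₂ θ hθ c e a, hT_symm₁ θ hθ c a e]
    rw [hT]; ring
  have hem := h_em θ hθ a
  have h2 : pder a (fun θ' => Real.log (πe θ')) θ - pder a (fun θ' => Real.log (πm θ')) θ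
      = -Ta θ a := by linarith
  rw [key, hS, h2]
  ring
end

section
/- Let Θ ⊆ ℝ^d be open and convex, α ∈ ℝ, and let T_a : Θ → ℝ (a = 1, …, d) be continuously differentiable functions satisfying the statistical equi-affinity condition ∂_b T_a(θ) = ∂_a T_b(θ) for all θ ∈ Θ and 1 ≤ a < b ≤ d. Let π_MAP, π_J : Θ → (0, ∞) be continuously differentiable. Then there exists a differentiable function π_PM : Θ → (0, ∞) such that ∂_a log(π_PM(θ)/(π_MAP(θ) π_J(θ))) = −((1−α)/4) T_a(θ) for all a = 1, …, d and all θ ∈ Θ; in particular, a matching prior pair (π_PM, π_MAP) exists. -/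
open Set MeasureTheory

lemma clm_apply_eq_sum {d : ℕ} (f : (Fin d → ℝ) →L[ℝ] ℝ) (w : Fin d → ℝ) :
    f w = ∑ a, w a * f (Pi.single a 1) := by
  have hw : w = ∑ a, w a • (Pi.single a (1 : ℝ) : Fin d → ℝ) := by
    funext j
    rw [Finset.sum_apply]
    simp [Pi.single_apply, mul_ite]
  calc f w = f (∑ a, w a • (Pi.single a (1 : ℝ) : Fin d → ℝ)) := by rw [← hw]
    _ = ∑ a, w a * f (Pi.single a 1) := by
        rw [map_sum]
        exact Finset.sum_congr rfl fun a _ => by rw [_root_.map_smul, smul_eq_mul]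

set_option maxHeartbeats 1000000 in
lemma poincare_key {d : ℕ} {Θ : Set (Fin d → ℝ)} (hΘ_open : IsOpen Θ) (hΘ_conv : Convex ℝ Θ)
    {T : Fin d → (Fin d → ℝ) → ℝ} (hT : ∀ a, ContDiffOn ℝ 1 (T a) Θ)
    (hsym : ∀ θ ∈ Θ, ∀ a b : Fin d,
      fderiv ℝ (T a) θ (Pi.single b 1) = fderiv ℝ (T b) θ (Pi.single a 1))
    {θ₀ : Fin d → ℝ} (hθ₀ : θ₀ ∈ Θ) :
    ∃ F : (Fin d → ℝ) → ℝ, ∀ θ ∈ Θ,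
      HasFDerivAt F
        (∑ a, T a θ • (ContinuousLinearMap.proj a : (Fin d → ℝ) →L[ℝ] ℝ)) θ := by
  classical
  set L : ℝ → (Fin d → ℝ) → (Fin d → ℝ) := fun t x => θ₀ + t • (x - θ₀) with hL
  set φ : (Fin d → ℝ) → ℝ → ℝ := fun x t => ∑ b, T b (L t x) * (x - θ₀) b with hφ
  set D : ℝ → (Fin d → ℝ) → ((Fin d → ℝ) →L[ℝ] ℝ) := fun t x =>
    ∑ b, ((t * (x - θ₀) b) • fderiv ℝ (T b) (L t x)
      + T b (L t x) • (ContinuousLinearMap.proj b : (Fin d → ℝ) →L[ℝ] ℝ)) with hD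
  have hLmem : ∀ {t : ℝ}, t ∈ Icc (0:ℝ) 1 → ∀ {x}, x ∈ Θ → L t x ∈ Θ := by
    intro t ht x hx
    have he : L t x = (1 - t) • θ₀ + t • x := by simp only [hL]; module
    rw [he]
    exact hΘ_conv hθ₀ hx (by linarith [ht.2]) ht.1 (by ring)
  have hTdiff : ∀ (b : Fin d), ∀ y ∈ Θ, DifferentiableAt ℝ (T b) y := fun b y hy =>
    (((hT b).differentiableOn one_ne_zero).differentiableAt (hΘ_open.mem_nhds hy))
  have hTcont : ∀ b : Fin d, ContinuousOn (T b) Θ := fun b => (hT b).continuousOn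
  have hDTcont : ∀ b : Fin d, ContinuousOn (fderiv ℝ (T b)) Θ := fun b =>
    (hT b).continuousOn_fderiv_of_isOpen hΘ_open le_rfl
  have hLcontx : ∀ x : Fin d → ℝ, Continuous fun t : ℝ => L t x := by
    intro x; simp only [hL]; fun_prop
  -- differentiability in x
  have hφdiff : ∀ {t : ℝ}, t ∈ Icc (0:ℝ) 1 → ∀ {x}, x ∈ Θ →
      HasFDerivAt (fun x' => φ x' t) (D t x) x := by
    intro t ht x hx
    have hmem := hLmem ht hx
    simp only [hφ, hD]
    refine HasFDerivAt.fun_sum fun b _ => ?_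
    have hinner : HasFDerivAt (fun x' : Fin d → ℝ => L t x')
        (t • ContinuousLinearMap.id ℝ (Fin d → ℝ)) x := by
      simpa only [hL, Pi.smul_apply, id_eq] using (((hasFDerivAt_id x).sub_const θ₀).const_smul t).const_add θ₀
    have hTb : HasFDerivAt (T b) (fderiv ℝ (T b) (L t x)) (L t x) :=
      (hTdiff b _ hmem).hasFDerivAt
    have hcomp := hTb.comp x hinner
    have hcoord : HasFDerivAt (fun x' : Fin d → ℝ => (x' - θ₀) b)
        ((ContinuousLinearMap.proj b : (Fin d → ℝ) →L[ℝ] ℝ)) x :=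
      ((ContinuousLinearMap.proj b : (Fin d → ℝ) →L[ℝ] ℝ).hasFDerivAt).sub_const (θ₀ b)
    have hmul := hcomp.mul hcoord
    refine hmul.congr_fderiv ?_
    ext v
    simp only [ContinuousLinearMap.add_apply, ContinuousLinearMap.smul_apply,
      ContinuousLinearMap.comp_apply, ContinuousLinearMap.coe_smul',
      ContinuousLinearMap.coe_id', Pi.smul_apply, id_eq, ContinuousLinearMap.proj_apply,
      smul_eq_mul, _root_.map_smul, Function.comp_apply]
    ring
  -- continuity in t
  have hφcont : ∀ x ∈ Θ, ContinuousOn (φ x) (Icc (0:ℝ) 1) := by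
    intro x hx
    apply continuousOn_finset_sum
    intro b _
    exact (((hTcont b).comp (hLcontx x).continuousOn fun t ht => hLmem ht hx).mul
      continuousOn_const)
  have hDcont : ∀ x ∈ Θ, ContinuousOn (fun t => D t x) (Icc (0:ℝ) 1) := by
    intro x hx
    apply continuousOn_finset_sum
    intro b _
    refine ContinuousOn.add
      (ContinuousOn.smul ((continuous_mul_right _).continuousOn)
        ((hDTcont b).comp (hLcontx x).continuousOn fun t ht => hLmem ht hx)) ?_
    exact ContinuousOn.smul
      ((hTcont b).comp (hLcontx x).continuousOn fun t ht => hLmem ht hx) continuousOn_const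
  have hφmeas : ∀ x ∈ Θ, AEStronglyMeasurable (φ x) (volume.restrict (Set.uIoc (0:ℝ) 1)) := by
    intro x hx
    rw [uIoc_of_le zero_le_one]
    exact ((hφcont x hx).mono Ioc_subset_Icc_self).aestronglyMeasurable measurableSet_Ioc
  have hφint : ∀ x ∈ Θ, IntervalIntegrable (φ x) volume 0 1 := by
    intro x hx
    apply ContinuousOn.intervalIntegrable
    rw [uIcc_of_le zero_le_one]; exact hφcont x hx
  refine ⟨fun x => ∫ t in (0:ℝ)..1, φ x t, ?_⟩
  intro θ hθ
  obtain ⟨ε, hε, hεsub⟩ := Metric.nhds_basis_closedBall.mem_iff.1 (hΘ_open.mem_nhds hθ)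
  have hball : Metric.ball θ ε ⊆ Θ := fun x hx => hεsub (Metric.ball_subset_closedBall hx)
  set K : Set (Fin d → ℝ) :=
    (fun p : ℝ × (Fin d → ℝ) => L p.1 p.2) '' (Icc (0:ℝ) 1 ×ˢ Metric.closedBall θ ε) with hK
  have hLcont : Continuous fun p : ℝ × (Fin d → ℝ) => L p.1 p.2 := by
    simp only [hL]; fun_prop
  have hKcomp : IsCompact K :=
    ((isCompact_Icc).prod (isCompact_closedBall θ ε)).image hLcont
  have hKΘ : K ⊆ Θ := by
    rintro _ ⟨⟨t, x⟩, ⟨ht, hx⟩, rfl⟩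
    exact hLmem ht (hεsub hx)
  have hbexists : ∀ b : Fin d, ∃ C : ℝ, 0 ≤ C ∧ ∀ y ∈ K,
      ‖fderiv ℝ (T b) y‖ ≤ C ∧ ‖T b y‖ ≤ C := by
    intro b
    obtain ⟨C1, hC1⟩ := hKcomp.exists_bound_of_continuousOn ((hDTcont b).mono hKΘ)
    obtain ⟨C2, hC2⟩ := hKcomp.exists_bound_of_continuousOn ((hTcont b).mono hKΘ)
    refine ⟨max 0 (max C1 C2), le_max_left _ _, fun y hy => ⟨?_, ?_⟩⟩
    · exact (hC1 y hy).trans ((le_max_left _ _).trans (le_max_right _ _))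
    · exact (hC2 y hy).trans ((le_max_right _ _).trans (le_max_right _ _))
  choose C hC0 hC using hbexists
  set R : ℝ := ‖θ - θ₀‖ + ε with hR
  set Cbig : ℝ := ∑ b, ((R + 1) * C b + C b) with hCbig
  have hKmem : ∀ {t : ℝ}, t ∈ Set.uIoc (0:ℝ) 1 → ∀ {x}, x ∈ Metric.ball θ ε → L t x ∈ K := by
    intro t ht x hx
    exact ⟨(t, x), ⟨Ioc_subset_Icc_self (by rwa [uIoc_of_le zero_le_one] at ht),
      Metric.ball_subset_closedBall hx⟩, rfl⟩
  have hbound : ∀ t ∈ Set.uIoc (0:ℝ) 1, ∀ x ∈ Metric.ball θ ε, ‖D t x‖ ≤ Cbig := by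
    intro t ht x hx
    have ht' : t ∈ Icc (0:ℝ) 1 := Ioc_subset_Icc_self (by rwa [uIoc_of_le zero_le_one] at ht)
    have htabs : |t| ≤ 1 := by rw [abs_of_nonneg ht'.1]; exact ht'.2
    have hxR : ‖x - θ₀‖ ≤ R := by
      have hd : ‖x - θ‖ ≤ ε := by
        have := Metric.mem_ball.1 hx
        rw [dist_eq_norm] at this
        exact this.le
      calc ‖x - θ₀‖ = ‖(x - θ) + (θ - θ₀)‖ := by congr 1; abel
        _ ≤ ‖x - θ‖ + ‖θ - θ₀‖ := norm_add_le _ _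
        _ ≤ ε + ‖θ - θ₀‖ := by linarith
        _ = R := by rw [hR]; ring
    have hmemK := hKmem ht hx
    calc ‖D t x‖ ≤ ∑ b, ‖(t * (x - θ₀) b) • fderiv ℝ (T b) (L t x)
          + T b (L t x) • (ContinuousLinearMap.proj b : (Fin d → ℝ) →L[ℝ] ℝ)‖ := by
          rw [hD]
          exact norm_sum_le _ _
      _ ≤ Cbig := by
          rw [hCbig]
          refine Finset.sum_le_sum fun b _ => ?_
          have hproj : ‖(ContinuousLinearMap.proj b : (Fin d → ℝ) →L[ℝ] ℝ)‖ ≤ 1 := by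
            refine ContinuousLinearMap.opNorm_le_bound _ zero_le_one fun v => ?_
            simpa using (norm_le_pi_norm v b).trans (le_of_eq (one_mul ‖v‖).symm)
          have hxb : |(x - θ₀) b| ≤ R :=
            le_trans (by simpa using norm_le_pi_norm (x - θ₀) b) hxR
          have h2 := (hC b _ hmemK).1
          have h3 := (hC b _ hmemK).2
          rw [Real.norm_eq_abs] at h3
          calc ‖(t * (x - θ₀) b) • fderiv ℝ (T b) (L t x)
              + T b (L t x) • (ContinuousLinearMap.proj b : (Fin d → ℝ) →L[ℝ] ℝ)‖
              ≤ ‖(t * (x - θ₀) b) • fderiv ℝ (T b) (L t x)‖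
                + ‖T b (L t x) • (ContinuousLinearMap.proj b : (Fin d → ℝ) →L[ℝ] ℝ)‖ :=
              norm_add_le _ _
            _ ≤ ‖t * (x - θ₀) b‖ * ‖fderiv ℝ (T b) (L t x)‖
                + ‖T b (L t x)‖ * ‖(ContinuousLinearMap.proj b : (Fin d → ℝ) →L[ℝ] ℝ)‖ :=
              add_le_add (norm_smul_le (t * (x - θ₀) b) (fderiv ℝ (T b) (L t x)))
                (norm_smul_le (T b (L t x)) (ContinuousLinearMap.proj b : (Fin d → ℝ) →L[ℝ] ℝ))
            _ ≤ (1 * (R + 1)) * C b + C b * 1 := by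
              have hR0 : (0:ℝ) ≤ R := by rw [hR]; positivity
              have h1 : ‖t * (x - θ₀) b‖ ≤ 1 * (R + 1) := by
                rw [Real.norm_eq_abs, abs_mul]
                have : |(x - θ₀) b| ≤ R + 1 := by linarith
                exact mul_le_mul htabs this (abs_nonneg _) zero_le_one
              have h3' : ‖T b (L t x)‖ ≤ C b := by rw [Real.norm_eq_abs]; exact h3
              exact add_le_add
                (mul_le_mul h1 h2 (norm_nonneg _) (by linarith))
                (mul_le_mul h3' hproj (norm_nonneg _) (hC0 b))
            _ = (R + 1) * C b + C b := by ring
  have hHF : HasFDerivAt (fun x => ∫ t in (0:ℝ)..1, φ x t)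
      (∫ t in (0:ℝ)..1, D t θ) θ := by
    refine intervalIntegral.hasFDerivAt_integral_of_dominated_of_fderiv_le
      (F := φ) (F' := fun x t => D t x) (bound := fun _ => Cbig) (Metric.ball_mem_nhds θ hε) ?_ (hφint θ hθ) ?_ ?_ ?_ ?_
    · filter_upwards [hΘ_open.mem_nhds hθ] with x hx using hφmeas x hx
    · rw [uIoc_of_le zero_le_one]
      exact (((hDcont θ hθ).mono Ioc_subset_Icc_self).aestronglyMeasurable measurableSet_Ioc)
    · exact Filter.Eventually.of_forall hbound
    · exact intervalIntegrable_const
    · refine Filter.Eventually.of_forall fun t ht x hx => ?_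
      exact hφdiff (Ioc_subset_Icc_self (by rwa [uIoc_of_le zero_le_one] at ht)) (hball hx)
  -- compute the integral via FTC
  set G : ℝ → ((Fin d → ℝ) →L[ℝ] ℝ) := fun t =>
    ∑ b, (t * T b (L t θ)) • (ContinuousLinearMap.proj b : (Fin d → ℝ) →L[ℝ] ℝ) with hG
  have hGderiv : ∀ t ∈ uIcc (0:ℝ) 1, HasDerivAt G (D t θ) t := by
    intro t ht
    rw [uIcc_of_le zero_le_one] at ht
    have hmem := hLmem ht hθ
    have hline : HasDerivAt (fun s : ℝ => L s θ) (θ - θ₀) t := by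
      have h0 : HasDerivAt (fun s : ℝ => s • (θ - θ₀)) (θ - θ₀) t := by
        simpa using (hasDerivAt_id t).smul_const (θ - θ₀)
      simpa only [hL] using h0.const_add θ₀
    have hterm : ∀ b : Fin d, HasDerivAt
        (fun s => (s * T b (L s θ)) • (ContinuousLinearMap.proj b : (Fin d → ℝ) →L[ℝ] ℝ))
        ((1 * T b (L t θ) + t * fderiv ℝ (T b) (L t θ) (θ - θ₀)) •
          (ContinuousLinearMap.proj b : (Fin d → ℝ) →L[ℝ] ℝ)) t := by
      intro b
      have hTb : HasDerivAt (fun s => T b (L s θ)) (fderiv ℝ (T b) (L t θ) (θ - θ₀)) t :=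
        (hTdiff b _ hmem).hasFDerivAt.comp_hasDerivAt t hline
      exact ((hasDerivAt_id t).mul hTb).smul_const (ContinuousLinearMap.proj b : (Fin d → ℝ) →L[ℝ] ℝ)
    have hsum := HasDerivAt.fun_sum (fun b (_ : b ∈ Finset.univ) => hterm b)
    have hswap : ∀ v : Fin d → ℝ,
        ∑ b, (t * (θ - θ₀) b) * (fderiv ℝ (T b) (L t θ) v)
          = ∑ b, (t * fderiv ℝ (T b) (L t θ) (θ - θ₀)) * v b := by
      intro v
      have h1 : ∀ b : Fin d, fderiv ℝ (T b) (L t θ) v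
          = ∑ a, v a * fderiv ℝ (T b) (L t θ) (Pi.single a 1) :=
        fun b => clm_apply_eq_sum _ v
      have h2 : ∀ b : Fin d, fderiv ℝ (T b) (L t θ) (θ - θ₀)
          = ∑ a, (θ - θ₀) a * fderiv ℝ (T b) (L t θ) (Pi.single a 1) :=
        fun b => clm_apply_eq_sum _ _
      simp only [h1, h2, Finset.mul_sum, Finset.sum_mul]
      rw [Finset.sum_comm]
      refine Finset.sum_congr rfl fun i _ => Finset.sum_congr rfl fun j _ => ?_
      rw [hsym _ hmem j i]
      ring
    have heq : D t θ = ∑ b, (1 * T b (L t θ) + t * fderiv ℝ (T b) (L t θ) (θ - θ₀)) •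
        (ContinuousLinearMap.proj b : (Fin d → ℝ) →L[ℝ] ℝ) := by
      ext v
      simp only [hD, ContinuousLinearMap.sum_apply, ContinuousLinearMap.add_apply,
        ContinuousLinearMap.smul_apply, ContinuousLinearMap.proj_apply, smul_eq_mul,
        one_mul, add_mul]
      rw [Finset.sum_add_distrib, Finset.sum_add_distrib, hswap v, add_comm]
    rw [heq]
    exact hsum
  have hDint : IntervalIntegrable (fun t => D t θ) volume 0 1 := by
    apply ContinuousOn.intervalIntegrable
    rw [uIcc_of_le zero_le_one]; exact hDcont θ hθ
  have hFTC := intervalIntegral.integral_eq_sub_of_hasDerivAt hGderiv hDint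
  have hG1 : G 1 = ∑ a, T a θ • (ContinuousLinearMap.proj a : (Fin d → ℝ) →L[ℝ] ℝ) := by
    have hL1 : L 1 θ = θ := by simp only [hL]; module
    simp [hG, hL1]
  have hG0 : G 0 = 0 := by simp [hG]
  rw [hFTC, hG1, hG0, sub_zero] at hHF
  exact hHF
/-- Under the statistical equi-affinity condition `∂_b T_a = ∂_a T_b`, a matching prior
pair exists: for any positive `π_MAP`, `π_J`, there is a positive differentiable `π_PM`
with `∂_a log(π_PM/(π_MAP π_J)) = −((1−α)/4) T_a` on `Θ`. -/
theorem stmt_7 {d : ℕ} (Θ : Set (Fin d → ℝ)) (hΘ_open : IsOpen Θ) (hΘ_conv : Convex ℝ Θ)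
    (α : ℝ) (T : Fin d → (Fin d → ℝ) → ℝ)
    (hT_smooth : ∀ a : Fin d, ContDiffOn ℝ 1 (T a) Θ)
    (h_equi : ∀ θ ∈ Θ, ∀ a b : Fin d, a < b → pder b (T a) θ = pder a (T b) θ)
    (πMAP πJ : (Fin d → ℝ) → ℝ)
    (hMAP_pos : ∀ θ ∈ Θ, 0 < πMAP θ) (hJ_pos : ∀ θ ∈ Θ, 0 < πJ θ)
    (hMAP_smooth : ContDiffOn ℝ 1 πMAP Θ) (hJ_smooth : ContDiffOn ℝ 1 πJ Θ) :
    ∃ πPM : (Fin d → ℝ) → ℝ,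
      (∀ θ ∈ Θ, 0 < πPM θ) ∧
      (∀ θ ∈ Θ, DifferentiableAt ℝ πPM θ) ∧
      ∀ θ ∈ Θ, ∀ a : Fin d,
        pder a (fun θ' => Real.log (πPM θ' / (πMAP θ' * πJ θ'))) θ =
          -((1 - α) / 4) * T a θ := by
  rcases Θ.eq_empty_or_nonempty with rfl | ⟨θ₀, hθ₀⟩
  · exact ⟨fun _ => 1, by simp, by simp, by simp⟩
  have hsym : ∀ θ ∈ Θ, ∀ a b : Fin d,
      fderiv ℝ (T a) θ (Pi.single b 1) = fderiv ℝ (T b) θ (Pi.single a 1) := by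
    intro θ hθ a b
    rcases lt_trichotomy a b with h | h | h
    · exact h_equi θ hθ a b h
    · subst h; rfl
    · exact (h_equi θ hθ b a h).symm
  obtain ⟨F, hF⟩ := poincare_key hΘ_open hΘ_conv hT_smooth hsym hθ₀
  set c : ℝ := -((1 - α) / 4) with hc
  refine ⟨fun θ' => πMAP θ' * πJ θ' * Real.exp (c * F θ'), ?_, ?_, ?_⟩
  · intro θ hθ
    exact mul_pos (mul_pos (hMAP_pos θ hθ) (hJ_pos θ hθ)) (Real.exp_pos _)
  · intro θ hθ
    have hM : DifferentiableAt ℝ πMAP θ :=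
      (hMAP_smooth.differentiableOn one_ne_zero).differentiableAt (hΘ_open.mem_nhds hθ)
    have hJd : DifferentiableAt ℝ πJ θ :=
      (hJ_smooth.differentiableOn one_ne_zero).differentiableAt (hΘ_open.mem_nhds hθ)
    have hFd : DifferentiableAt ℝ F θ := (hF θ hθ).differentiableAt
    exact (hM.mul hJd).mul ((hFd.const_mul c).exp)
  · intro θ hθ a
    have hEq : (fun θ' => Real.log
        ((πMAP θ' * πJ θ' * Real.exp (c * F θ')) / (πMAP θ' * πJ θ')))
        =ᶠ[nhds θ] fun θ' => c * F θ' := by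
      filter_upwards [hΘ_open.mem_nhds hθ] with x hx
      have hne : πMAP x * πJ x ≠ 0 := (mul_pos (hMAP_pos x hx) (hJ_pos x hx)).ne'
      rw [mul_comm (πMAP x * πJ x) (Real.exp (c * F x)), mul_div_assoc,
        div_self hne, mul_one, Real.log_exp]
    have hcF : HasFDerivAt (fun θ' => c * F θ')
        (c • (∑ b, T b θ • (ContinuousLinearMap.proj b : (Fin d → ℝ) →L[ℝ] ℝ))) θ :=
      (hF θ hθ).const_mul c
    unfold pder
    rw [hEq.fderiv_eq, hcF.fderiv]
    simp only [ContinuousLinearMap.smul_apply, ContinuousLinearMap.sum_apply,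
      ContinuousLinearMap.proj_apply, smul_eq_mul, Pi.single_apply, mul_ite, mul_one,
      mul_zero, Finset.sum_ite_eq', Finset.mem_univ, if_true]
end
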